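/- For every θ ∈ ℝ there exists a constant M > 0 such that |(D_x^θ D_z^θ k^0)(x,z)| ≤ M |α(x)| for all (x,z) ∈ D₀; consequently the limit kernel (x,z) ↦ (D_x^θ D_z^θ k^0)(x,z)/α(x) (defined for x ≠ 0) is essentially bounded on D₀. -/

import Mathlib

open Complex

/-- the kernel `k⁰(x,z) = B₀(z)A₀(x) − B₀(x)A₀(z)` -/
noncomputable def kker (A B : ℝ → ℂ) (x z : ℝ) : ℂ := B z * A x - B x * A z

/-- `(D_z^θ k⁰)(x,z) = iθ ∂_z k⁰(x,z) − iδ(z) k⁰(x,z)` -/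
noncomputable def Dzk (δ : ℝ → ℝ) (θ : ℝ) (A A' B B' : ℝ → ℂ) (x z : ℝ) : ℂ :=
  Complex.I * (θ : ℂ) * (B' z * A x - B x * A' z)
    - Complex.I * (δ z : ℂ) * kker A B x z

/-- `∂_x (D_z^θ k⁰)(x,z)` -/
noncomputable def pxDzk (δ : ℝ → ℝ) (θ : ℝ) (A A' B B' : ℝ → ℂ) (x z : ℝ) : ℂ :=
  Complex.I * (θ : ℂ) * (B' z * A' x - B' x * A' z)
    - Complex.I * (δ z : ℂ) * (B z * A' x - B' x * A z)

/-- `(D_x^θ D_z^θ k⁰)(x,z)` -/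
noncomputable def DxDzk (δ : ℝ → ℝ) (θ : ℝ) (A A' B B' : ℝ → ℂ) (x z : ℝ) : ℂ :=
  Complex.I * (θ : ℂ) * pxDzk δ θ A A' B B' x z
    - Complex.I * (δ x : ℂ) * Dzk δ θ A A' B B' x z

/-- Boundedness of the limit kernel on the domain
`D₀ = {(x,z) ∈ [-L,H]² : 0 ≤ z ≤ x or x ≤ z ≤ 0}` (Proposition 4.2 of the
paper): `|(D_x^θ D_z^θ k⁰)(x,z)| ≤ M |α(x)|` on `D₀`, hence the limit kernel
`(D_x^θ D_z^θ k⁰)(x,z)/α(x)` is (essentially) bounded on `D₀`. -/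
theorem limit_kernel_bounded
    (L H r : ℝ) (hL : 0 < L) (hH : 0 < H) (hr : 0 < r)
    (α δ : ℝ → ℝ)
    (hα : ContDiffOn ℝ 2 α (Set.Ici (-L)))
    (hαbd : ∃ C, ∀ x, -L ≤ x → |α x| ≤ C)
    (hα0 : α 0 = 0) (hα'0 : deriv α 0 < 0)
    (hαr : ∀ x ∈ Set.Icc (-L) H, r * |x| ≤ |α x|)
    (hδ : ContDiffOn ℝ 1 δ (Set.Ici (-L)))
    (hδbd : ∃ C, ∀ x, -L ≤ x → |δ x| ≤ C)
    (θ : ℝ)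
    (A A' B B' : ℝ → ℂ)
    (hA : ∀ x, -L ≤ x → HasDerivAt A (A' x) x)
    (hA' : ∀ x, -L ≤ x → HasDerivAt A' (-(α x : ℂ) * A x) x)
    (hB : ∀ x, -L ≤ x → HasDerivAt B (B' x) x)
    (hB' : ∀ x, -L ≤ x → HasDerivAt B' (-(α x : ℂ) * B x) x)
    (hA0 : A 0 = 1) (hA'0 : A' 0 = 0) (hB0 : B 0 = 0) (hB'0 : B' 0 = 1) :
    ∃ M > 0, ∀ x z : ℝ, x ∈ Set.Icc (-L) H →
      ((0 ≤ z ∧ z ≤ x) ∨ (x ≤ z ∧ z ≤ 0)) →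
      ‖DxDzk δ θ A A' B B' x z‖ ≤ M * |α x|
      ∧ (x ≠ 0 → ‖DxDzk δ θ A A' B B' x z / (α x : ℂ)‖ ≤ M) := by
  classical
  set T : Set ℝ := Set.Ici (-L) with hTdef
  set S : Set ℝ := Set.Icc (-L) H with hSdef
  have hST : S ⊆ T := fun y hy => hy.1
  set δ' : ℝ → ℝ := derivWithin δ T with hδ'def
  have hδdiff : DifferentiableOn ℝ δ T := hδ.differentiableOn one_ne_zero
  have hδ'c : ContinuousOn δ' T := hδ.continuousOn_derivWithin (uniqueDiffOn_Ici _) le_rfl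
  have hδwd : ∀ w ∈ S, HasDerivWithinAt (fun y => ((δ y : ℝ) : ℂ)) ((δ' w : ℝ) : ℂ) S w := by
    intro w hw
    have h1 : HasDerivWithinAt δ (δ' w) S w :=
      ((hδdiff w (hST hw)).hasDerivWithinAt).mono hST
    exact h1.ofReal_comp
  -- the z-derivative of the kernel
  set F : ℝ → ℝ → ℂ := fun x w =>
    Complex.I * (θ : ℂ) *
      (Complex.I * (θ : ℂ) * ((-(α w : ℂ) * B w) * A' x - B' x * (-(α w : ℂ) * A w))
        - ((Complex.I * (δ' w : ℂ)) * (B w * A' x - B' x * A w)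
            + (Complex.I * (δ w : ℂ)) * (B' w * A' x - B' x * A' w)))
    - Complex.I * (δ x : ℂ) *
      (Complex.I * (θ : ℂ) * ((-(α w : ℂ) * B w) * A x - B x * (-(α w : ℂ) * A w))
        - ((Complex.I * (δ' w : ℂ)) * (B w * A x - B x * A w)
            + (Complex.I * (δ w : ℂ)) * (B' w * A x - B x * A' w))) with hFdef
  have hf : ∀ (x : ℝ), ∀ w ∈ S,
      HasDerivWithinAt (fun w => DxDzk δ θ A A' B B' x w) (F x w) S w := by
    intro x w hw
    have hwT : -L ≤ w := hw.1
    have hAw : HasDerivWithinAt A (A' w) S w := (hA w hwT).hasDerivWithinAt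
    have hA'w : HasDerivWithinAt A' (-(α w : ℂ) * A w) S w := (hA' w hwT).hasDerivWithinAt
    have hBw : HasDerivWithinAt B (B' w) S w := (hB w hwT).hasDerivWithinAt
    have hB'w : HasDerivWithinAt B' (-(α w : ℂ) * B w) S w := (hB' w hwT).hasDerivWithinAt
    have hδC := hδwd w hw
    have g1 := (hB'w.mul_const (A' x)).sub (hA'w.const_mul (B' x))
    have g2 := (hBw.mul_const (A' x)).sub (hAw.const_mul (B' x))
    have g3 := (hB'w.mul_const (A x)).sub (hA'w.const_mul (B x))
    have g4 := (hBw.mul_const (A x)).sub (hAw.const_mul (B x))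
    have t2 := (hδC.const_mul Complex.I).mul g2
    have t4 := (hδC.const_mul Complex.I).mul g4
    have hP := (g1.const_mul (Complex.I * (θ : ℂ))).sub t2
    have hQ := (g3.const_mul (Complex.I * (θ : ℂ))).sub t4
    have hfin := (hP.const_mul (Complex.I * (θ : ℂ))).sub
      (hQ.const_mul (Complex.I * (δ x : ℂ)))
    simp only [DxDzk, pxDzk, Dzk, kker]
    exact hfin
  -- continuity of F on the compact square
  have hαc : ContinuousOn α T := hα.continuousOn
  have hδc : ContinuousOn δ T := hδ.continuousOn
  have hAc : ContinuousOn A T := fun y hy => (hA y hy).continuousAt.continuousWithinAt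
  have hA'c : ContinuousOn A' T := fun y hy => (hA' y hy).continuousAt.continuousWithinAt
  have hBc : ContinuousOn B T := fun y hy => (hB y hy).continuousAt.continuousWithinAt
  have hB'c : ContinuousOn B' T := fun y hy => (hB' y hy).continuousAt.continuousWithinAt
  have hm1 : Set.MapsTo (fun p : ℝ × ℝ => p.1) (S ×ˢ S) T := fun p hp => hST hp.1
  have hm2 : Set.MapsTo (fun p : ℝ × ℝ => p.2) (S ×ˢ S) T := fun p hp => hST hp.2
  have cconst : ∀ (f : ℝ → ℂ), ContinuousOn f T →
      ContinuousOn (fun p : ℝ × ℝ => f p.1) (S ×ˢ S) ∧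
      ContinuousOn (fun p : ℝ × ℝ => f p.2) (S ×ˢ S) := by
    intro f hfc
    exact ⟨hfc.comp continuous_fst.continuousOn hm1,
           hfc.comp continuous_snd.continuousOn hm2⟩
  obtain ⟨cA1, cA2⟩ := cconst A hAc
  obtain ⟨cA'1, cA'2⟩ := cconst A' hA'c
  obtain ⟨cB1, cB2⟩ := cconst B hBc
  obtain ⟨cB'1, cB'2⟩ := cconst B' hB'c
  have cRe : ∀ (g : ℝ → ℝ), ContinuousOn g T →
      ContinuousOn (fun p : ℝ × ℝ => ((g p.1 : ℝ) : ℂ)) (S ×ˢ S) ∧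
      ContinuousOn (fun p : ℝ × ℝ => ((g p.2 : ℝ) : ℂ)) (S ×ˢ S) := by
    intro g hgc
    have := cconst (fun y => ((g y : ℝ) : ℂ))
      (Complex.continuous_ofReal.comp_continuousOn hgc)
    exact this
  obtain ⟨cα1, cα2⟩ := cRe α hαc
  obtain ⟨cδ1, cδ2⟩ := cRe δ hδc
  obtain ⟨cδ'1, cδ'2⟩ := cRe δ' hδ'c
  have hFc : ContinuousOn (fun p : ℝ × ℝ => F p.1 p.2) (S ×ˢ S) := by
    simp only [hFdef]
    exact (continuousOn_const.mul
        ((continuousOn_const.mul (((cα2.neg.mul cB2).mul cA'1).sub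
            (cB'1.mul (cα2.neg.mul cA2)))).sub
          (((continuousOn_const.mul cδ'2).mul ((cB2.mul cA'1).sub (cB'1.mul cA2))).add
            ((continuousOn_const.mul cδ2).mul ((cB'2.mul cA'1).sub (cB'1.mul cA'2)))))).sub
      ((continuousOn_const.mul cδ1).mul
        ((continuousOn_const.mul (((cα2.neg.mul cB2).mul cA1).sub
            (cB1.mul (cα2.neg.mul cA2)))).sub
          (((continuousOn_const.mul cδ'2).mul ((cB2.mul cA1).sub (cB1.mul cA2))).add
            ((continuousOn_const.mul cδ2).mul ((cB'2.mul cA1).sub (cB1.mul cA'2))))))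
  obtain ⟨C, hC⟩ := (isCompact_Icc.prod isCompact_Icc).exists_bound_of_continuousOn hFc
  have h0S : (0 : ℝ) ∈ S := ⟨by linarith, hH.le⟩
  have hC0 : 0 ≤ C := le_trans (norm_nonneg _) (hC (0, 0) ⟨h0S, h0S⟩)
  refine ⟨(C + 1) / r, by positivity, ?_⟩
  intro x z hx hz
  have hzS : z ∈ S := by
    rcases hz with ⟨h1, h2⟩ | ⟨h1, h2⟩
    · exact ⟨by linarith [hx.1, hL], le_trans h2 hx.2⟩
    · exact ⟨le_trans hx.1 h1, by linarith [hH]⟩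
  have hzx : |z - x| ≤ |x| := by
    rcases hz with ⟨h1, h2⟩ | ⟨h1, h2⟩
    · rw [_root_.abs_of_nonneg (le_trans h1 h2 : (0:ℝ) ≤ x)]
      exact abs_le.2 ⟨by linarith, by linarith⟩
    · rw [_root_.abs_of_nonpos (le_trans h1 h2 : x ≤ (0:ℝ))]
      exact abs_le.2 ⟨by linarith, by linarith⟩
  have hdiag : DxDzk δ θ A A' B B' x x = 0 := by
    simp only [DxDzk, pxDzk, Dzk, kker]; ring
  have hbound : ∀ w ∈ S, ‖F x w‖ ≤ C := fun w hw => hC (x, w) ⟨hx, hw⟩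
  have hmvt :=
    Convex.norm_image_sub_le_of_norm_hasDerivWithin_le (hf x) hbound
      (convex_Icc _ _) hx hzS
  rw [hdiag, sub_zero] at hmvt
  have key : ‖DxDzk δ θ A A' B B' x z‖ ≤ ((C + 1) / r) * |α x| := by
    have h1 : ‖DxDzk δ θ A A' B B' x z‖ ≤ C * |x| := by
      calc ‖DxDzk δ θ A A' B B' x z‖ ≤ C * ‖z - x‖ := hmvt
        _ = C * |z - x| := by rw [Real.norm_eq_abs]
        _ ≤ C * |x| := by exact mul_le_mul_of_nonneg_left hzx hC0
    have h2 : r * |x| ≤ |α x| := hαr x hx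
    have h3 : C * |x| ≤ ((C + 1) / r) * (r * |x|) := by
      rw [div_mul_eq_mul_div, mul_comm r |x|, ← mul_assoc, mul_div_assoc,
        div_self hr.ne', mul_one]
      nlinarith [abs_nonneg x]
    calc ‖DxDzk δ θ A A' B B' x z‖ ≤ C * |x| := h1
      _ ≤ ((C + 1) / r) * (r * |x|) := h3
      _ ≤ ((C + 1) / r) * |α x| := by
          exact mul_le_mul_of_nonneg_left h2 (by positivity)
  refine ⟨key, fun hx0 => ?_⟩
  have hαpos : 0 < |α x| := lt_of_lt_of_le (by positivity : (0:ℝ) < r * |x|) (hαr x hx)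
  have hnorm : ‖((α x : ℝ) : ℂ)‖ = |α x| := by simp
  rw [norm_div, hnorm, div_le_iff₀ hαpos]
  exact key
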